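/- Let M be a real d×d matrix whose off-diagonal entries are all nonpositive and each of whose columns sums to 1, let γ > 0, and set M_γ = γ(M − I) + I. Then M_γ is invertible, every entry of M_γ^{-1} is nonnegative, every row of M_γ^{-1} contains a strictly positive entry, and consequently for every vector b ∈ ℝ^d with all components strictly positive, the unique solution x of M_γ x = b has all components strictly positive. -/

import Mathlib

open scoped NNReal

section aux
variable {d : ℕ}

attribute [local instance] Matrix.linftyOpNormedRing Matrix.linftyOpNormedAlgebra

lemma pow_entry_nonneg (t : Matrix (Fin d) (Fin d) ℝ) (ht : ∀ i j, 0 ≤ t i j) :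
    ∀ n i j, 0 ≤ (t ^ n) i j := by
  intro n
  induction n with
  | zero => intro i j; simp [Matrix.one_apply]; positivity
  | succ n ih =>
    intro i j
    rw [pow_succ, Matrix.mul_apply]
    exact Finset.sum_nonneg fun k _ => mul_nonneg (ih i k) (ht k j)

lemma aux_inverse (t : Matrix (Fin d) (Fin d) ℝ) (ht : ∀ i j, 0 ≤ t i j)
    (hrow : ∀ i, ∑ j, t i j < 1) :
    ∃ S : Matrix (Fin d) (Fin d) ℝ, (1 - t) * S = 1 ∧ S * (1 - t) = 1 ∧
      ∀ i j, 0 ≤ S i j := by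
  have hnorm : ‖t‖ < 1 := by
    rw [Matrix.linfty_opNorm_def]
    have : ((Finset.univ : Finset (Fin d)).sup fun i => ∑ j, ‖t i j‖₊) < (1 : ℝ≥0) := by
      rw [Finset.sup_lt_iff (by norm_num : (⊥ : ℝ≥0) < 1)]
      intro i _
      have : ((∑ j, ‖t i j‖₊ : ℝ≥0) : ℝ) < 1 := by
        push_cast
        have h1 : ∀ j, (‖t i j‖₊ : ℝ) = t i j := fun j => by
          simp [Real.norm_eq_abs, abs_of_nonneg (ht i j)]
        calc (∑ j, (‖t i j‖₊ : ℝ)) = ∑ j, t i j := by simp_rw [h1]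
        _ < 1 := hrow i
      exact_mod_cast this
    exact_mod_cast this
  have hsum : Summable fun n : ℕ => t ^ n := summable_geometric_of_norm_lt_one hnorm
  refine ⟨∑' n : ℕ, t ^ n, mul_neg_geom_series t hnorm, geom_series_mul_neg t hnorm, ?_⟩
  intro i j
  let e : Matrix (Fin d) (Fin d) ℝ →ₗ[ℝ] ℝ :=
    { toFun := fun A => A i j
      map_add' := fun A B => rfl
      map_smul' := fun c A => rfl }
  have h2 : (∑' n : ℕ, t ^ n) i j = ∑' n : ℕ, (t ^ n) i j :=
    (LinearMap.toContinuousLinearMap e).map_tsum hsum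
  rw [h2]
  exact tsum_nonneg fun n => pow_entry_nonneg t ht n i j

end aux

/-- If `M` is a real `d × d` matrix with nonpositive off-diagonal
entries and unit column sums, and `γ > 0`, then `M_γ = γ(M - I) + I` is invertible,
its inverse has nonnegative entries, every row of the inverse contains a strictly
positive entry, and consequently the solution of `M_γ x = b` is componentwise
strictly positive whenever `b` is. -/
theorem stmt_14 {d : ℕ} (M : Matrix (Fin d) (Fin d) ℝ)
    (hoff : ∀ i j, i ≠ j → M i j ≤ 0)
    (hcol : ∀ j, ∑ i, M i j = 1)
    (γ : ℝ) (hγ : 0 < γ) :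
    IsUnit (γ • (M - 1) + 1) ∧
    (∀ i j, 0 ≤ (γ • (M - 1) + 1)⁻¹ i j) ∧
    (∀ i, ∃ j, 0 < (γ • (M - 1) + 1)⁻¹ i j) ∧
    ∀ b x : Fin d → ℝ, (∀ i, 0 < b i) →
      (γ • (M - 1) + 1).mulVec x = b → ∀ i, 0 < x i := by
  set A : Matrix (Fin d) (Fin d) ℝ := γ • (M - 1) + 1 with hA
  have hAoff : ∀ i j, i ≠ j → A i j = γ * M i j := by
    intro i j hij
    simp [hA, Matrix.add_apply, Matrix.smul_apply, Matrix.sub_apply, Matrix.one_apply_ne hij,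
      smul_eq_mul]
  have hAdiag : ∀ i, A i i = γ * (M i i - 1) + 1 := by
    intro i
    simp [hA, Matrix.add_apply, Matrix.smul_apply, Matrix.sub_apply, Matrix.one_apply_eq,
      smul_eq_mul]
  have hAcol : ∀ j, ∑ i, A i j = 1 := by
    intro j
    have : ∑ i, A i j = γ * ((∑ i, M i j) - ∑ i, (1 : Matrix (Fin d) (Fin d) ℝ) i j)
        + ∑ i, (1 : Matrix (Fin d) (Fin d) ℝ) i j := by
      simp [hA, Matrix.add_apply, Matrix.smul_apply, Matrix.sub_apply, Finset.sum_add_distrib,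
        Finset.mul_sum, mul_sub, Finset.sum_sub_distrib, smul_eq_mul]
    rw [this, hcol]
    simp [Matrix.one_apply]
  have hMdiag : ∀ i, 1 ≤ M i i := by
    intro i
    have h1 := hcol i
    rw [← Finset.add_sum_erase _ _ (Finset.mem_univ i)] at h1
    have h2 : ∑ j ∈ Finset.univ.erase i, M j i ≤ 0 :=
      Finset.sum_nonpos fun j hj => hoff j i (Finset.ne_of_mem_erase hj)
    linarith
  set c : ℝ := 1 + γ * ∑ i, (M i i - 1) with hc
  have hsum0 : 0 ≤ ∑ i, (M i i - 1) :=
    Finset.sum_nonneg fun i _ => by linarith [hMdiag i]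
  have hc1 : 1 ≤ c := by nlinarith
  have hc0 : 0 < c := by linarith
  set t : Matrix (Fin d) (Fin d) ℝ := c⁻¹ • (c • (1 : Matrix (Fin d) (Fin d) ℝ) - A.transpose) with htdef
  have ht : ∀ i j, 0 ≤ t i j := by
    intro i j
    rcases eq_or_ne i j with rfl | hij
    · have : t i i = c⁻¹ * (γ * ((∑ k, (M k k - 1)) - (M i i - 1))) := by
        simp only [htdef, Matrix.smul_apply, Matrix.sub_apply, Matrix.transpose_apply,
          Matrix.one_apply_eq, hAdiag i, smul_eq_mul, hc]
        ring
      rw [this]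
      have hrest : 0 ≤ (∑ k, (M k k - 1)) - (M i i - 1) := by
        rw [← Finset.add_sum_erase _ _ (Finset.mem_univ i)]
        have : 0 ≤ ∑ k ∈ Finset.univ.erase i, (M k k - 1) :=
          Finset.sum_nonneg fun k _ => by linarith [hMdiag k]
        linarith
      positivity
    · have : t i j = c⁻¹ * (-(γ * M j i)) := by
        simp only [htdef, Matrix.smul_apply, Matrix.sub_apply, Matrix.transpose_apply,
          Matrix.one_apply_ne hij, hAoff j i (Ne.symm hij), smul_eq_mul]
        ring
      rw [this]
      have := hoff j i (Ne.symm hij)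
      have : 0 ≤ -(γ * M j i) := by nlinarith
      positivity
  have htrow : ∀ i, ∑ j, t i j < 1 := by
    intro i
    have hAT : ∑ j, A.transpose i j = 1 := by
      simpa [Matrix.transpose_apply] using hAcol i
    have : ∑ j, t i j = c⁻¹ * (c - 1) := by
      simp only [htdef, Matrix.smul_apply, Matrix.sub_apply, smul_eq_mul]
      rw [← Finset.mul_sum, Finset.sum_sub_distrib, hAT]
      congr 2
      simp [Matrix.one_apply]
    rw [this]
    rw [inv_mul_lt_iff₀ hc0]
    linarith
  obtain ⟨S, hS1, hS2, hSpos⟩ := aux_inverse t ht htrow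
  have hfact : A.transpose = c • (1 - t) := by
    rw [htdef, smul_sub, smul_smul, mul_inv_cancel₀ (ne_of_gt hc0), one_smul, sub_sub_cancel]
  have hright : A.transpose * (c⁻¹ • S) = 1 := by
    rw [hfact, Matrix.smul_mul, Matrix.mul_smul, smul_smul, mul_inv_cancel₀ (ne_of_gt hc0),
      one_smul, hS1]
  have hleft : (c⁻¹ • S) * A.transpose = 1 := by
    rw [hfact, Matrix.mul_smul, Matrix.smul_mul, smul_smul, mul_inv_cancel₀ (ne_of_gt hc0),
      one_smul, hS2]
  have hdetT : IsUnit A.transpose.det := by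
    have := congrArg Matrix.det hright
    rw [Matrix.det_mul, Matrix.det_one] at this
    exact IsUnit.of_mul_eq_one _ this
  have hdet : IsUnit A.det := by rwa [← Matrix.det_transpose]
  have hUnit : IsUnit A := (Matrix.isUnit_iff_isUnit_det A).mpr hdet
  have hinvT : A.transpose⁻¹ = c⁻¹ • S := Matrix.inv_eq_right_inv hright
  have hinv : ∀ i j, A⁻¹ i j = c⁻¹ * S j i := by
    intro i j
    have : A⁻¹.transpose = c⁻¹ • S := by rw [Matrix.transpose_nonsing_inv, hinvT]
    have h2 : A⁻¹ i j = A⁻¹.transpose j i := rfl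
    rw [h2, this]
    simp [smul_eq_mul]
  have hnonneg : ∀ i j, 0 ≤ A⁻¹ i j := by
    intro i j
    rw [hinv]
    have := hSpos j i
    positivity
  have hrowpos : ∀ i, ∃ j, 0 < A⁻¹ i j := by
    intro i
    by_contra h
    push_neg at h
    have hz : ∀ j, A⁻¹ i j = 0 := fun j => le_antisymm (h j) (hnonneg i j)
    have hmul := Matrix.nonsing_inv_mul A hdet
    have := congrFun (congrFun hmul i) i
    rw [Matrix.mul_apply] at this
    simp only [hz, zero_mul, Finset.sum_const_zero, Matrix.one_apply_eq] at this
    exact zero_ne_one this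
  refine ⟨hUnit, hnonneg, hrowpos, ?_⟩
  intro b x hb hx i
  have hxeq : x = A⁻¹.mulVec b := by
    rw [← hx, Matrix.mulVec_mulVec, Matrix.nonsing_inv_mul A hdet, Matrix.one_mulVec]
  rw [hxeq]
  obtain ⟨j0, hj0⟩ := hrowpos i
  rw [Matrix.mulVec, dotProduct]
  refine Finset.sum_pos' (fun j _ => mul_nonneg (hnonneg i j) (le_of_lt (hb j))) ?_
  exact ⟨j0, Finset.mem_univ j0, mul_pos hj0 (hb j0)⟩
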